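/- arXiv:1712.00992 — 7 statements merged into one kernel-verified Lean document; each statement's English description precedes it below -/
import Mathlib

section
/- If the r-fold graph G = (V, E_1, …, E_r) percolates, then for every nonempty subset of colours {j_1 < j_2 < … < j_s} ⊆ {1, …, r}, the s-fold graph (V, E_{j_1}, …, E_{j_s}) percolates. In particular, if G percolates then each graph (V, E_i) is connected. -/
open MeasureTheory Filter

noncomputable section

namespace Jigsaw

variable {V : Type*} {r : ℕ}

/-- The auxiliary relation between clusters of the current partition `P`:
two distinct clusters of `P` are related if for every colour there is an edge of that
colour with one endpoint in each cluster. -/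
def AuxRel (E : Fin r → Set (Sym2 V)) (P : Set (Set V)) (C C' : Set V) : Prop :=
  C ∈ P ∧ C' ∈ P ∧ C ≠ C' ∧ ∀ i : Fin r, ∃ u ∈ C, ∃ v ∈ C', s(u, v) ∈ E i

/-- One step of the jigsaw process: merge the connected components of the auxiliary graph. -/
def nextPart (E : Fin r → Set (Sym2 V)) (P : Set (Set V)) : Set (Set V) :=
  {S | ∃ C ∈ P, S = ⋃₀ {C' | Relation.ReflTransGen (AuxRel E P) C C'}}

/-- The set `W` percolates: starting from singleton clusters of the vertices of `W`,
iterating the jigsaw process eventually yields the single cluster `W`. -/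
def PercolatesOn (E : Fin r → Set (Sym2 V)) (W : Set V) : Prop :=
  ∃ t : ℕ, (nextPart E)^[t] {S | ∃ v ∈ W, S = {v}} = {W}

/-- The `r`-fold graph with edge sets `E` percolates. -/
def Percolates (E : Fin r → Set (Sym2 V)) : Prop :=
  PercolatesOn E Set.univ

/-- The simple graph on `V` whose edges are the (non-loop) pairs of `E`. -/
def toSimpleGraph (E : Set (Sym2 V)) : SimpleGraph V where
  Adj u v := u ≠ v ∧ s(u, v) ∈ E
  symm := ⟨fun u v h => ⟨h.1.symm, by rw [Sym2.eq_swap]; exact h.2⟩⟩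
  loopless := ⟨fun v h => h.1 rfl⟩

/-! ### Auxiliary lemmas -/

/-- Partition predicate. -/
def IsPart (P : Set (Set V)) (W : Set V) : Prop :=
  ⋃₀ P = W ∧ (∀ C ∈ P, C.Nonempty) ∧ ∀ C ∈ P, ∀ D ∈ P, C ≠ D → Disjoint C D

lemma auxRel_symm (E : Fin r → Set (Sym2 V)) (P : Set (Set V)) :
    Symmetric (AuxRel E P) := by
  rintro C D ⟨hC, hD, hne, h⟩
  refine ⟨hD, hC, hne.symm, fun i => ?_⟩
  obtain ⟨u, hu, v, hv, he⟩ := h i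
  exact ⟨v, hv, u, hu, by rwa [Sym2.eq_swap]⟩

lemma mem_of_rtg {E : Fin r → Set (Sym2 V)} {P : Set (Set V)} {C D : Set V}
    (h : Relation.ReflTransGen (AuxRel E P) C D) (hC : C ∈ P) : D ∈ P := by
  induction h with
  | refl => exact hC
  | tail _ hstep _ => exact hstep.2.1

lemma compSet_eq {E : Fin r → Set (Sym2 V)} {P : Set (Set V)} {C C' : Set V}
    (h : Relation.ReflTransGen (AuxRel E P) C C') :
    {D | Relation.ReflTransGen (AuxRel E P) C D}
      = {D | Relation.ReflTransGen (AuxRel E P) C' D} := by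
  have hsymm : ∀ {a b : Set V}, Relation.ReflTransGen (AuxRel E P) a b →
        Relation.ReflTransGen (AuxRel E P) b a := fun hab => by
      haveI : Std.Symm (AuxRel E P) := ⟨fun a b h => auxRel_symm E P h⟩
      exact Std.Symm.symm _ _ hab
  ext D
  exact ⟨fun hD => Relation.ReflTransGen.trans (hsymm h) hD,
    fun hD => Relation.ReflTransGen.trans h hD⟩

lemma isPart_nextPart {E : Fin r → Set (Sym2 V)} {P : Set (Set V)} {W : Set V}
    (hP : IsPart P W) : IsPart (nextPart E P) W := by
  obtain ⟨hcov, hne, hdisj⟩ := hP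
  refine ⟨?_, ?_, ?_⟩
  · apply Set.Subset.antisymm
    · rintro x ⟨S, ⟨C, hC, rfl⟩, hx⟩
      obtain ⟨D, hD, hxD⟩ := hx
      have : D ∈ P := mem_of_rtg hD hC
      exact hcov ▸ ⟨D, this, hxD⟩
    · rintro x hx
      rw [← hcov] at hx
      obtain ⟨C, hC, hxC⟩ := hx
      exact ⟨_, ⟨C, hC, rfl⟩, C, Relation.ReflTransGen.refl, hxC⟩
  · rintro S ⟨C, hC, rfl⟩
    obtain ⟨x, hx⟩ := hne C hC
    exact ⟨x, C, Relation.ReflTransGen.refl, hx⟩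
  · rintro S ⟨C, hC, rfl⟩ S' ⟨C', hC', rfl⟩ hSS'
    rw [Set.disjoint_left]
    rintro x ⟨D, hD, hxD⟩ ⟨D', hD', hxD'⟩
    have hDP : D ∈ P := mem_of_rtg hD hC
    have hD'P : D' ∈ P := mem_of_rtg hD' hC'
    have hDD' : D = D' := by
      by_contra hne'
      exact (hdisj D hDP D' hD'P hne').ne_of_mem hxD hxD' rfl
    subst hDD'
    have hsymm : ∀ {a b : Set V}, Relation.ReflTransGen (AuxRel E P) a b →
          Relation.ReflTransGen (AuxRel E P) b a := fun hab => by
        haveI : Std.Symm (AuxRel E P) := ⟨fun a b h => auxRel_symm E P h⟩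
        exact Std.Symm.symm _ _ hab
    have : Relation.ReflTransGen (AuxRel E P) C C' :=
      Relation.ReflTransGen.trans hD (hsymm hD')
    exact hSS' (by rw [compSet_eq this])

lemma refines_nextPart {s : ℕ} {E : Fin r → Set (Sym2 V)} {E' : Fin s → Set (Sym2 V)}
    (hEE' : ∀ k : Fin s, ∃ i : Fin r, E' k = E i)
    {P P' : Set (Set V)} (href : ∀ C ∈ P, ∃ D ∈ P', C ⊆ D) :
    ∀ S ∈ nextPart E P, ∃ T ∈ nextPart E' P', S ⊆ T := by
  rintro S ⟨C, hC, rfl⟩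
  obtain ⟨D, hD, hCD⟩ := href C hC
  refine ⟨⋃₀ {D' | Relation.ReflTransGen (AuxRel E' P') D D'}, ⟨D, hD, rfl⟩, ?_⟩
  -- key: every cluster reachable from `C` lies inside a cluster reachable from `D`
  have key : ∀ C'', Relation.ReflTransGen (AuxRel E P) C C'' →
      ∃ D'' ∈ P', C'' ⊆ D'' ∧ Relation.ReflTransGen (AuxRel E' P') D D'' := by
    intro C'' h
    induction h with
    | refl => exact ⟨D, hD, hCD, Relation.ReflTransGen.refl⟩
    | @tail C₁ C₂ _ hstep ih =>
      obtain ⟨D₁, hD₁, hsub₁, hrtg₁⟩ := ih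
      obtain ⟨D₂, hD₂, hsub₂⟩ := href C₂ hstep.2.1
      by_cases hEq : D₁ = D₂
      · exact ⟨D₂, hD₂, hsub₂, hEq ▸ hrtg₁⟩
      · refine ⟨D₂, hD₂, hsub₂, hrtg₁.tail ⟨hD₁, hD₂, hEq, fun k => ?_⟩⟩
        obtain ⟨i, hi⟩ := hEE' k
        obtain ⟨u, hu, v, hv, he⟩ := hstep.2.2.2 i
        exact ⟨u, hsub₁ hu, v, hsub₂ hv, hi ▸ he⟩
  rintro x ⟨C'', hC'', hxC''⟩
  obtain ⟨D'', hD'', hsub, hrtg⟩ := key C'' hC''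
  exact ⟨D'', hrtg, hsub hxC''⟩

lemma isPart_singletons (W : Set V) : IsPart {S | ∃ v ∈ W, S = {v}} W := by
  refine ⟨?_, ?_, ?_⟩
  · apply Set.Subset.antisymm
    · rintro x ⟨S, ⟨v, hv, rfl⟩, hx⟩
      rw [Set.mem_singleton_iff] at hx; subst hx; exact hv
    · intro x hx; exact ⟨{x}, ⟨x, hx, rfl⟩, rfl⟩
  · rintro S ⟨v, _, rfl⟩; exact ⟨v, rfl⟩
  · rintro S ⟨v, _, rfl⟩ S' ⟨w, _, rfl⟩ hne
    rw [Set.disjoint_left]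
    rintro x hx hx'
    rw [Set.mem_singleton_iff] at hx hx'
    exact hne (by rw [← hx, ← hx'])

/-- Connectivity invariant for colour `i`. -/
lemma good_nextPart {E : Fin r → Set (Sym2 V)} {P : Set (Set V)} {W : Set V} (i : Fin r)
    (hP : IsPart P W)
    (hgood : ∀ C ∈ P, ∀ u ∈ C, ∀ v ∈ C, (toSimpleGraph (E i)).Reachable u v) :
    ∀ C ∈ nextPart E P, ∀ u ∈ C, ∀ v ∈ C, (toSimpleGraph (E i)).Reachable u v := by
  obtain ⟨_, hne, hdisj⟩ := hP
  rintro S ⟨C, hC, rfl⟩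
  have key : ∀ D, Relation.ReflTransGen (AuxRel E P) C D →
      ∀ u ∈ C, ∀ v ∈ D, (toSimpleGraph (E i)).Reachable u v := by
    intro D h
    induction h with
    | refl => exact hgood C hC
    | @tail D₁ D₂ hrtg hstep ih =>
      intro u hu v hv
      obtain ⟨u', hu', v', hv', he⟩ := hstep.2.2.2 i
      have hne' : u' ≠ v' := fun h => (hdisj D₁ hstep.1 D₂ hstep.2.1
        hstep.2.2.1).ne_of_mem hu' hv' h
      have hadj : (toSimpleGraph (E i)).Adj u' v' := ⟨hne', he⟩
      exact ((ih u hu u' hu').trans hadj.reachable).trans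
        (hgood D₂ hstep.2.1 v' hv' v hv)
  rintro u ⟨Du, hDu, huDu⟩ v ⟨Dv, hDv, hvDv⟩
  obtain ⟨c, hc⟩ := hne C hC
  exact (key Du hDu c hc u huDu).symm.trans (key Dv hDv c hc v hvDv)

/-- If an `r`-fold graph percolates then, for every nonempty subset of the
colours (listed by a strictly monotone map `φ : Fin s → Fin r` with `s ≥ 1`), the induced
`s`-fold graph percolates; in particular every colour graph is connected. -/
theorem percolates_colour_subset (n r : ℕ) (E : Fin r → Set (Sym2 (Fin n)))
    (hperc : Percolates E) :
    (∀ s : ℕ, 1 ≤ s → ∀ φ : Fin s → Fin r, StrictMono φ →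
        Percolates (fun k : Fin s => E (φ k))) ∧
      ∀ i : Fin r, (toSimpleGraph (E i)).Connected := by
  obtain ⟨t, ht⟩ := hperc
  set P₀ : Set (Set (Fin n)) := {S | ∃ v ∈ (Set.univ : Set (Fin n)), S = {v}} with hP₀
  constructor
  · -- colour subsets
    intro s _ φ _
    set E' : Fin s → Set (Sym2 (Fin n)) := fun k => E (φ k) with hE'
    have hEE' : ∀ k : Fin s, ∃ i : Fin r, E' k = E i := fun k => ⟨φ k, rfl⟩
    have main : ∀ m : ℕ, IsPart ((nextPart E')^[m] P₀) Set.univ ∧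
        ∀ S ∈ (nextPart E)^[m] P₀, ∃ T ∈ (nextPart E')^[m] P₀, S ⊆ T := by
      intro m
      induction m with
      | zero => exact ⟨isPart_singletons _, fun S hS => ⟨S, hS, le_refl S⟩⟩
      | succ m ih =>
        rw [Function.iterate_succ_apply', Function.iterate_succ_apply']
        exact ⟨isPart_nextPart ih.1, refines_nextPart hEE' ih.2⟩
    obtain ⟨⟨hcov, hne, hdisj⟩, href⟩ := main t
    have huniv : Set.univ ∈ (nextPart E)^[t] P₀ := by rw [ht]; rfl
    obtain ⟨T, hT, hsub⟩ := href _ huniv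
    have hTuniv : T = Set.univ := Set.eq_univ_of_univ_subset hsub
    subst hTuniv
    refine ⟨t, ?_⟩
    apply Set.Subset.antisymm
    · intro S hS
      by_contra hne'
      have hdisjS := hdisj S hS Set.univ hT (by simpa using hne')
      obtain ⟨x, hx⟩ := hne S hS
      exact (hdisjS.ne_of_mem hx (Set.mem_univ x)) rfl
    · intro S hS
      rw [Set.mem_singleton_iff] at hS; subst hS; exact hT
  · -- connectivity of each colour graph
    intro i
    have main : ∀ m : ℕ, IsPart ((nextPart E)^[m] P₀) Set.univ ∧
        ∀ C ∈ (nextPart E)^[m] P₀, ∀ u ∈ C, ∀ v ∈ C,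
          (toSimpleGraph (E i)).Reachable u v := by
      intro m
      induction m with
      | zero =>
        refine ⟨isPart_singletons _, ?_⟩
        rintro C ⟨w, _, rfl⟩ u hu v hv
        rw [Set.mem_singleton_iff] at hu hv
        subst hu; subst hv
        exact SimpleGraph.Reachable.refl _
      | succ m ih =>
        rw [Function.iterate_succ_apply']
        exact ⟨isPart_nextPart ih.1, good_nextPart i ih.1 ih.2⟩
    obtain ⟨⟨_, hne, _⟩, hgood⟩ := main t
    have huniv : Set.univ ∈ (nextPart E)^[t] P₀ := by rw [ht]; rfl
    have hnonempty : (Set.univ : Set (Fin n)).Nonempty := hne _ huniv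
    haveI : Nonempty (Fin n) := ⟨hnonempty.choose⟩
    exact ⟨fun u v => hgood _ huniv u (Set.mem_univ u) v (Set.mem_univ v)⟩

end Jigsaw
end
end

section
/- Let r ≥ 2 be an integer and C ≥ 1 a constant. There exists N such that for every natural number n ≥ N the following holds: if real numbers 0 ≤ p_1 ≤ p_2 ≤ … ≤ p_r ≤ 1 satisfy p_1 ≥ C (ln n)/n and p_1 p_2 ⋯ p_i ≥ C/(n (ln n)^{i−1}) for every 2 ≤ i ≤ r, then there exist real numbers 0 ≤ p_1' ≤ p_2' ≤ … ≤ p_r' ≤ 1 such that p_i' ≤ p_i for every i, p_1' ≥ C (ln n)/n, p_1' p_2' ⋯ p_i' ≥ C/(n (ln n)^{i−1}) for every 2 ≤ i ≤ r, and moreover p_1' p_2' ⋯ p_r' = C/(n (ln n)^{r−1}). -/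
open Finset Filter

/-- The main construction, for a fixed `n` satisfying the largeness conditions. -/
private lemma key_construction (r : ℕ) (hr : 2 ≤ r) (C : ℝ) (hC : 1 ≤ C) (n : ℕ)
    (hL1 : 1 ≤ Real.log n)
    (hbig : C ^ (r - 1) * (Real.log n) ^ (2 * r - 1) ≤ (n : ℝ) ^ (r - 1))
    (p : ℕ → ℝ)
    (hp01 : ∀ i, 1 ≤ i → i ≤ r → 0 ≤ p i ∧ p i ≤ 1)
    (hmono : ∀ i j, 1 ≤ i → i ≤ j → j ≤ r → p i ≤ p j)
    (hp1 : C * Real.log n / n ≤ p 1)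
    (hprod : ∀ i, 2 ≤ i → i ≤ r →
      C / (n * (Real.log n) ^ (i - 1)) ≤ ∏ j ∈ Finset.Icc 1 i, p j) :
    ∃ q : ℕ → ℝ,
      (∀ i, 1 ≤ i → i ≤ r → 0 ≤ q i ∧ q i ≤ 1) ∧
      (∀ i j, 1 ≤ i → i ≤ j → j ≤ r → q i ≤ q j) ∧
      (∀ i, 1 ≤ i → i ≤ r → q i ≤ p i) ∧
      C * Real.log n / n ≤ q 1 ∧
      (∀ i, 2 ≤ i → i ≤ r →
        C / (n * (Real.log n) ^ (i - 1)) ≤ ∏ j ∈ Finset.Icc 1 i, q j) ∧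
      ∏ j ∈ Finset.Icc 1 r, q j = C / (n * (Real.log n) ^ (r - 1)) := by
  set L : ℝ := Real.log n with hLdef
  have hLpos : (0 : ℝ) < L := lt_of_lt_of_le one_pos hL1
  have hn0 : 0 < n := by
    rcases Nat.eq_zero_or_pos n with h | h
    · exfalso; rw [hLdef, h] at hL1; simp at hL1; linarith [hL1]
    · exact h
  have hnR : (0 : ℝ) < n := by exact_mod_cast hn0
  have hCpos : (0 : ℝ) < C := lt_of_lt_of_le one_pos hC
  have hp1pos : 0 < C * L / n := by positivity
  have hp_pos : ∀ i, 1 ≤ i → i ≤ r → 0 < p i := fun i h1 h2 =>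
    lt_of_lt_of_le hp1pos (hp1.trans (hmono 1 i le_rfl h1 h2))
  set P : ℕ → ℝ := fun i => ∏ l ∈ Finset.Icc 1 i, p l with hPdef
  have hP0 : P 0 = 1 := by simp [hPdef]
  have hPsucc : ∀ i, P (i + 1) = P i * p (i + 1) := fun i =>
    Finset.prod_Icc_succ_top (by omega) p
  have hPpos : ∀ i, i ≤ r → 0 < P i := by
    intro i
    induction i with
    | zero => intro _; rw [hP0]; norm_num
    | succ i ih =>
      intro h
      rw [hPsucc]
      exact mul_pos (ih (by omega)) (hp_pos _ (by omega) h)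
  set T : ℝ := C / (n * L ^ (r - 1)) with hTdef
  have hTpos : 0 < T := by positivity
  -- existence of the cut point
  have hex : ∃ j, j + 1 ≤ r ∧ T ≤ P j * p (j + 1) ^ (r - j) := by
    refine ⟨r - 1, by omega, ?_⟩
    have h := hprod r hr le_rfl
    have h1 : r - (r - 1) = 1 := by omega
    have h2 : (r - 1) + 1 = r := by omega
    rw [h1, pow_one, h2]
    calc T ≤ P r := h
    _ = P (r - 1) * p r := by rw [← h2, hPsucc, h2]
  obtain ⟨j, ⟨hjr, hjT⟩, hjmin'⟩ :
      ∃ j, (j + 1 ≤ r ∧ T ≤ P j * p (j + 1) ^ (r - j)) ∧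
        ∀ l, l < j → ¬(l + 1 ≤ r ∧ T ≤ P l * p (l + 1) ^ (r - l)) :=
    ⟨Nat.find hex, Nat.find_spec hex, fun l hl => Nat.find_min hex hl⟩
  have hjmin : ∀ l, l < j → P l * p (l + 1) ^ (r - l) < T := by
    intro l hl
    have h := hjmin' l hl
    push_neg at h
    exact h (by omega)
  set m := r - j with hmdef
  have hm1 : 1 ≤ m := by omega
  have hPj : 0 < P j := hPpos j (by omega)
  set x : ℝ := T / P j with hxdef
  have hxpos : 0 < x := div_pos hTpos hPj
  set s : ℝ := x ^ ((m : ℝ)⁻¹) with hsdef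
  have hspos : 0 < s := Real.rpow_pos_of_pos hxpos _
  have hsm : s ^ m = x := by
    rw [hsdef, ← Real.rpow_natCast (x ^ ((m : ℝ)⁻¹)) m, ← Real.rpow_mul hxpos.le,
      inv_mul_cancel₀ (by exact_mod_cast (by omega : m ≠ 0)), Real.rpow_one]
  have hs_le : ∀ a : ℝ, 0 ≤ a → (s ≤ a ↔ x ≤ a ^ m) := by
    intro a ha
    rw [← pow_le_pow_iff_left₀ hspos.le ha (by omega : m ≠ 0), hsm]
  have hle_s : ∀ a : ℝ, 0 ≤ a → (a ≤ s ↔ a ^ m ≤ x) := by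
    intro a ha
    rw [← pow_le_pow_iff_left₀ ha hspos.le (by omega : m ≠ 0), hsm]
  have hsk : s ≤ p (j + 1) := by
    refine (hs_le _ (hp_pos (j + 1) (by omega) hjr).le).mpr ?_
    rw [hxdef, div_le_iff₀ hPj, mul_comm]
    exact hjT
  have hps : j ≠ 0 → p j ≤ s := by
    intro hj0
    obtain ⟨l, rfl⟩ := Nat.exists_eq_succ_of_ne_zero hj0
    have hlt := hjmin l (Nat.lt_succ_self l)
    have hrl : r - l = m + 1 := by omega
    rw [hrl, pow_succ] at hlt
    refine (hle_s _ (hp_pos (l + 1) (by omega) (by omega)).le).mpr ?_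
    rw [hxdef, le_div_iff₀ hPj, hPsucc l]
    calc p (l + 1) ^ m * (P l * p (l + 1)) = P l * (p (l + 1) ^ m * p (l + 1)) := by ring
    _ ≤ T := hlt.le
  -- s is at most 1 / log n
  have hsL : s ≤ 1 / L := by
    refine (hs_le _ (by positivity)).mpr ?_
    rw [hxdef, div_pow, one_pow, div_le_div_iff₀ hPj (by positivity), one_mul]
    -- goal : T * L ^ m ≤ P j
    rcases (by omega : j = 0 ∨ j = 1 ∨ 2 ≤ j) with h0 | h1 | h2
    · subst h0
      rw [hP0, hmdef, Nat.sub_zero]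
      have hCL : C * L ≤ n := by
        have h1 : (C * L) ^ (r - 1) ≤ C ^ (r - 1) * L ^ (2 * r - 1) := by
          rw [mul_pow]
          exact mul_le_mul_of_nonneg_left (pow_le_pow_right₀ hL1 (by omega)) (by positivity)
        exact (pow_le_pow_iff_left₀ (by positivity) hnR.le (by omega)).mp (h1.trans hbig)
      have hLr : L ^ r = L ^ (r - 1) * L := by rw [← pow_succ]; congr 1; omega
      rw [hTdef, hLr, div_mul_eq_mul_div, div_le_one (by positivity)]
      calc C * (L ^ (r - 1) * L) = (C * L) * L ^ (r - 1) := by ring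
      _ ≤ n * L ^ (r - 1) := mul_le_mul_of_nonneg_right hCL (by positivity)
    · subst h1
      have hP1 : P 1 = p 1 := by simp [hPdef]
      rw [hP1, hmdef]
      have he : T * L ^ (r - 1) = C / n := by
        rw [hTdef]; field_simp
      rw [he]
      refine le_trans ?_ hp1
      rw [div_le_div_iff₀ hnR hnR]
      nlinarith [mul_nonneg (mul_nonneg (sub_nonneg.mpr hL1) hCpos.le) hnR.le]
    · have hPlow := hprod j h2 (by omega)
      refine le_trans (le_of_eq ?_) hPlow
      rw [hTdef, hmdef]
      have hsplit : L ^ (r - 1) = L ^ (j - 1) * L ^ (r - j) := by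
        rw [← pow_add]; congr 1; omega
      rw [hsplit]
      field_simp
  have hsL1 : s * L ≤ 1 := by
    have := hsL
    rw [le_div_iff₀ hLpos] at this
    simpa using this
  -- the new probabilities
  set q : ℕ → ℝ := fun i => if i ≤ j then p i else s with hqdef
  have hq_eval : ∀ l, q l = if l ≤ j then p l else s := fun l => rfl
  have hqprod : ∀ i, j ≤ i → ∏ l ∈ Finset.Icc 1 i, q l = P j * s ^ (i - j) := by
    intro i hji
    induction i, hji using Nat.le_induction with
    | base =>
      rw [Nat.sub_self, pow_zero, mul_one, hPdef]
      refine Finset.prod_congr rfl fun l hl => ?_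
      rw [Finset.mem_Icc] at hl
      rw [hq_eval, if_pos hl.2]
    | succ i hji ih =>
      rw [Finset.prod_Icc_succ_top (by omega), ih, hq_eval,
        if_neg (by omega : ¬ i + 1 ≤ j), show i + 1 - j = (i - j) + 1 from by omega,
        pow_succ, mul_assoc]
  have htotal : ∏ l ∈ Finset.Icc 1 r, q l = T := by
    rw [hqprod r (by omega), ← hmdef, hsm, hxdef]
    field_simp
  have hq_le_p : ∀ i, 1 ≤ i → i ≤ r → q i ≤ p i := by
    intro i h1 h2
    rw [hq_eval]
    by_cases h : i ≤ j
    · rw [if_pos h]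
    · rw [if_neg h]
      exact hsk.trans (hmono (j + 1) i (by omega) (by omega) h2)
  refine ⟨q, ?_, ?_, hq_le_p, ?_, ?_, htotal⟩
  · -- bounds
    intro i h1 h2
    constructor
    · rw [hq_eval]
      by_cases h : i ≤ j
      · rw [if_pos h]; exact (hp_pos i h1 h2).le
      · rw [if_neg h]; exact hspos.le
    · exact (hq_le_p i h1 h2).trans (hp01 i h1 h2).2
  · -- monotone
    intro i i' h1 hii' h2
    rw [hq_eval, hq_eval]
    by_cases hi : i ≤ j
    · by_cases hi' : i' ≤ j
      · rw [if_pos hi, if_pos hi']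
        exact hmono i i' h1 hii' (by omega)
      · rw [if_pos hi, if_neg hi']
        exact (hmono i j h1 hi (by omega)).trans (hps (by omega))
    · rw [if_neg hi, if_neg (by omega : ¬ i' ≤ j)]
  · -- q 1 lower bound
    rw [hq_eval]
    by_cases h1j : 1 ≤ j
    · rw [if_pos h1j]; exact hp1
    · rw [if_neg h1j]
      have hj0 : j = 0 := by omega
      refine (hle_s _ hp1pos.le).mpr ?_
      rw [hxdef, hj0, hP0, div_one, hmdef, hj0, Nat.sub_zero]
      rw [div_pow, hTdef, div_le_div_iff₀ (by positivity) (by positivity)]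
      have hC1 : C ^ r = C ^ (r - 1) * C := by rw [← pow_succ]; congr 1; omega
      have hL2 : L ^ r * L ^ (r - 1) = L ^ (2 * r - 1) := by rw [← pow_add]; congr 1; omega
      have e2 : (n : ℝ) ^ r = n * n ^ (r - 1) := by
        rw [← pow_succ']; congr 1; omega
      have e1 : (C * L) ^ r * ((n : ℝ) * L ^ (r - 1)) = (C * n) * (C ^ (r - 1) * L ^ (2 * r - 1)) := by
        rw [mul_pow, hC1, ← hL2]; ring
      rw [e1, e2]
      calc (C * n) * (C ^ (r - 1) * L ^ (2 * r - 1)) ≤ (C * n) * (n : ℝ) ^ (r - 1) :=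
        mul_le_mul_of_nonneg_left hbig (by positivity)
      _ = C * ((n : ℝ) * n ^ (r - 1)) := by ring
  · -- intermediate bounds
    intro i h2i hir
    rcases le_or_gt i j with hij | hji
    · have he : ∏ l ∈ Finset.Icc 1 i, q l = P i := by
        rw [hPdef]
        refine Finset.prod_congr rfl fun l hl => ?_
        rw [Finset.mem_Icc] at hl
        rw [hq_eval, if_pos (by omega : l ≤ j)]
      rw [he]
      exact hprod i h2i hir
    · rw [hqprod i (by omega)]
      have hsplit : s ^ (i - j) * s ^ (r - i) = s ^ m := by rw [← pow_add]; congr 1; omega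
      have hTsplit : P j * s ^ (i - j) * s ^ (r - i) = T := by
        rw [mul_assoc, hsplit, hsm, hxdef]
        field_simp
      have hTL : C / ((n : ℝ) * L ^ (i - 1)) = T * L ^ (r - i) := by
        rw [hTdef]
        have hsplit2 : L ^ (r - 1) = L ^ (i - 1) * L ^ (r - i) := by
          rw [← pow_add]; congr 1; omega
        rw [hsplit2]
        field_simp
      rw [hTL, ← hTsplit]
      calc (P j * s ^ (i - j) * s ^ (r - i)) * L ^ (r - i)
          = (P j * s ^ (i - j)) * (s * L) ^ (r - i) := by rw [mul_pow]; ring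
      _ ≤ (P j * s ^ (i - j)) * 1 :=
        mul_le_mul_of_nonneg_left (pow_le_one₀ (by positivity) hsL1) (by positivity)
      _ = P j * s ^ (i - j) := mul_one _

/-- For `r ≥ 2`, `C ≥ 1` and `n` large enough, any probabilities
`0 ≤ p 1 ≤ ⋯ ≤ p r ≤ 1` satisfying the supercritical conditions can be decreased to
probabilities `q` still satisfying the supercritical conditions but with
`q 1 * ⋯ * q r = C / (n (ln n)^(r-1))`. -/
theorem exists_reduced_probabilities (r : ℕ) (hr : 2 ≤ r) (C : ℝ) (hC : 1 ≤ C) :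
    ∃ N : ℕ, ∀ n : ℕ, N ≤ n →
      ∀ p : ℕ → ℝ,
        (∀ i, 1 ≤ i → i ≤ r → 0 ≤ p i ∧ p i ≤ 1) →
        (∀ i j, 1 ≤ i → i ≤ j → j ≤ r → p i ≤ p j) →
        C * Real.log n / n ≤ p 1 →
        (∀ i, 2 ≤ i → i ≤ r →
          C / (n * (Real.log n) ^ (i - 1)) ≤ ∏ j ∈ Finset.Icc 1 i, p j) →
        ∃ q : ℕ → ℝ,
          (∀ i, 1 ≤ i → i ≤ r → 0 ≤ q i ∧ q i ≤ 1) ∧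
          (∀ i j, 1 ≤ i → i ≤ j → j ≤ r → q i ≤ q j) ∧
          (∀ i, 1 ≤ i → i ≤ r → q i ≤ p i) ∧
          C * Real.log n / n ≤ q 1 ∧
          (∀ i, 2 ≤ i → i ≤ r →
            C / (n * (Real.log n) ^ (i - 1)) ≤ ∏ j ∈ Finset.Icc 1 i, q j) ∧
          ∏ j ∈ Finset.Icc 1 r, q j = C / (n * (Real.log n) ^ (r - 1)) := by
  have hCpos : (0 : ℝ) < C := lt_of_lt_of_le one_pos hC
  have h1 : ∀ᶠ x : ℝ in atTop, 1 ≤ Real.log x :=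
    Real.tendsto_log_atTop.eventually_ge_atTop 1
  have h2 : ∀ᶠ x : ℝ in atTop,
      C ^ (r - 1) * (Real.log x) ^ (2 * r - 1) ≤ x ^ (r - 1) := by
    have hlo := Real.isLittleO_pow_log_id_atTop (n := 2 * r - 1)
    have hc : (0 : ℝ) < (C ^ (r - 1))⁻¹ := by positivity
    filter_upwards [hlo.def hc, eventually_ge_atTop (1 : ℝ)] with x hx hx1
    rw [Real.norm_eq_abs, Real.norm_eq_abs, id] at hx
    have hlog : 0 ≤ Real.log x := Real.log_nonneg hx1
    rw [abs_of_nonneg (by positivity), abs_of_nonneg (by linarith)] at hx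
    have hxx : C ^ (r - 1) * (Real.log x) ^ (2 * r - 1) ≤ x := by
      rw [inv_mul_eq_div, le_div_iff₀ (by positivity)] at hx
      calc C ^ (r - 1) * (Real.log x) ^ (2 * r - 1)
          = (Real.log x) ^ (2 * r - 1) * C ^ (r - 1) := by ring
      _ ≤ x := hx
    exact hxx.trans (le_self_pow₀ hx1 (by omega))
  obtain ⟨N, hN⟩ := eventually_atTop.mp
    (tendsto_natCast_atTop_atTop.eventually (h1.and h2))
  refine ⟨N, fun n hn p h01 hmono hp1 hprod => ?_⟩
  exact key_construction r hr C hC n (hN n hn).1 (hN n hn).2 p h01 hmono hp1 hprod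
end

section
/- Let r ≥ 2 be an integer, t ≥ 1 a natural number, and 0 ≤ p_1 ≤ p_2 ≤ … ≤ p_r ≤ 1 real numbers such that 1 − p_2 t/3 ≥ 1/2. Define i_t := max{ i ∈ {2, …, r} : 1 − p_i t/3 ≥ 1/2 } and P_i := p_1 p_2 ⋯ p_i. Then (p_1/3) · ∏_{j=2}^{r} (1 − (1 − p_j/3)^t) ≥ (1/5)^{r−1} · (P_{i_t}/3^{i_t}) · t^{i_t−1}. -/
private lemma aux_pow_mul (x : ℝ) (t : ℕ) (hx0 : 0 ≤ x) (hx1 : x ≤ 1) :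
    (1 - x) ^ t * (1 + t * x) ≤ 1 := by
  calc (1 - x) ^ t * (1 + t * x) ≤ (1 - x) ^ t * (1 + x) ^ t := by
        apply mul_le_mul_of_nonneg_left (one_add_mul_le_pow (by linarith) t)
          (pow_nonneg (by linarith) t)
    _ = (1 - x ^ 2) ^ t := by rw [← mul_pow]; ring_nf
    _ ≤ 1 := pow_le_one₀ (by nlinarith) (by nlinarith)

private lemma aux_small (x : ℝ) (t : ℕ) (hx0 : 0 ≤ x) (hx1 : x ≤ 1)
    (hs : x * t ≤ 1 / 2) : x * t / 5 ≤ 1 - (1 - x) ^ t := by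
  have h := aux_pow_mul x t hx0 hx1
  have hy : (0:ℝ) ≤ (1 - x) ^ t := pow_nonneg (by linarith) t
  have hs0 : (0:ℝ) ≤ x * t := mul_nonneg hx0 (Nat.cast_nonneg t)
  nlinarith [h, hy, hs0, hs]

private lemma aux_big (x : ℝ) (t : ℕ) (hx0 : 0 ≤ x) (hx1 : x ≤ 1)
    (hs : (1:ℝ) / 2 ≤ x * t) : (1:ℝ) / 5 ≤ 1 - (1 - x) ^ t := by
  have h := aux_pow_mul x t hx0 hx1
  have hy : (0:ℝ) ≤ (1 - x) ^ t := pow_nonneg (by linarith) t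
  nlinarith [h, hy, hs]

/-- Lower bound for the one-step success probability of the 1-by-1 algorithm:
with `i_t` the largest colour `i ∈ {2, …, r}` with `1 - p i * t / 3 ≥ 1/2`, we have
`(p 1 / 3) ∏_{j=2}^{r} (1 - (1 - p j / 3)^t) ≥ (1/5)^(r-1) (P_{i_t} / 3^{i_t}) t^{i_t - 1}`. -/
theorem one_step_success_lower_bound (r : ℕ) (hr : 2 ≤ r) (t : ℕ) (ht : 1 ≤ t)
    (p : ℕ → ℝ)
    (hp01 : ∀ i, 1 ≤ i → i ≤ r → 0 ≤ p i ∧ p i ≤ 1)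
    (hmono : ∀ i j, 1 ≤ i → i ≤ j → j ≤ r → p i ≤ p j)
    (h2 : (1 / 2 : ℝ) ≤ 1 - p 2 * t / 3)
    (it : ℕ)
    (hit : it = sSup {i : ℕ | 2 ≤ i ∧ i ≤ r ∧ (1 / 2 : ℝ) ≤ 1 - p i * t / 3}) :
    (1 / 5 : ℝ) ^ (r - 1) * ((∏ j ∈ Finset.Icc 1 it, p j) / 3 ^ it) * (t : ℝ) ^ (it - 1) ≤
      p 1 / 3 * ∏ j ∈ Finset.Icc 2 r, (1 - (1 - p j / 3) ^ t) := by
  set S : Set ℕ := {i : ℕ | 2 ≤ i ∧ i ≤ r ∧ (1 / 2 : ℝ) ≤ 1 - p i * t / 3} with hS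
  have hbdd : BddAbove S := ⟨r, fun i hi => hi.2.1⟩
  have h2S : 2 ∈ S := ⟨le_refl 2, hr, h2⟩
  have hmem : it ∈ S := by rw [hit]; exact Nat.sSup_mem ⟨2, h2S⟩ hbdd
  have hmax : ∀ j, j ∈ S → j ≤ it := fun j hj => hit ▸ le_csSup hbdd hj
  obtain ⟨hit2, hitr, hpit⟩ := hmem
  have ht0 : (0:ℝ) < t := by exact_mod_cast ht
  -- facts for j in [2, it]
  have hsmall : ∀ j ∈ Finset.Ioc 1 it, p j * t / 15 ≤ 1 - (1 - p j / 3) ^ t := by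
    intro j hj
    rw [Finset.mem_Ioc] at hj
    obtain ⟨hp0, hp1⟩ := hp01 j hj.1.le (hj.2.trans hitr)
    have hle : p j ≤ p it := hmono j it hj.1.le hj.2 hitr
    have hs : p j / 3 * t ≤ 1 / 2 := by nlinarith
    have := aux_small (p j / 3) t (by linarith) (by linarith) hs
    linarith
  have hbigf : ∀ j ∈ Finset.Ioc it r, (1:ℝ) / 5 ≤ 1 - (1 - p j / 3) ^ t := by
    intro j hj
    rw [Finset.mem_Ioc] at hj
    obtain ⟨hp0, hp1⟩ := hp01 j (by omega) hj.2
    have hnot : j ∉ S := fun h => absurd (hmax j h) (by omega)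
    have : ¬ ((1 / 2 : ℝ) ≤ 1 - p j * t / 3) := fun h => hnot ⟨by omega, hj.2, h⟩
    have hs : (1:ℝ) / 2 ≤ p j / 3 * t := by nlinarith [not_le.mp this]
    exact aux_big (p j / 3) t (by linarith) (by linarith) hs
  -- nonnegativity of factors
  have hfnonneg : ∀ j, 1 ≤ j → j ≤ r → (0:ℝ) ≤ 1 - (1 - p j / 3) ^ t := by
    intro j h1 h2'
    obtain ⟨hp0, hp1⟩ := hp01 j h1 h2'
    have : (1 - p j / 3) ^ t ≤ 1 := pow_le_one₀ (by linarith) (by linarith)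
    linarith
  have hp1 := hp01 1 le_rfl (by omega)
  -- split products
  have hIcc2r : Finset.Icc 2 r = Finset.Ioc 1 r := by rw [← Finset.Icc_add_one_left_eq_Ioc]; rfl
  have hsplit : (∏ j ∈ Finset.Ioc 1 it, (1 - (1 - p j / 3) ^ t)) *
      ∏ j ∈ Finset.Ioc it r, (1 - (1 - p j / 3) ^ t)
      = ∏ j ∈ Finset.Icc 2 r, (1 - (1 - p j / 3) ^ t) := by
    rw [hIcc2r]
    exact Finset.prod_Ioc_consecutive _ (by omega) hitr
  have hQsplit : ∏ j ∈ Finset.Icc 1 it, p j = p 1 * ∏ j ∈ Finset.Ioc 1 it, p j := by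
    have : Finset.Icc 1 it = insert 1 (Finset.Ioc 1 it) := by
      ext x; simp [Finset.mem_Icc, Finset.mem_Ioc]; omega
    rw [this, Finset.prod_insert (by simp)]
  have hcard1 : (Finset.Ioc 1 it).card = it - 1 := Nat.card_Ioc 1 it
  have hcard2 : (Finset.Ioc it r).card = r - it := Nat.card_Ioc it r
  -- product lower bounds
  have hA : ∏ j ∈ Finset.Ioc 1 it, (p j * t / 15) ≤
      ∏ j ∈ Finset.Ioc 1 it, (1 - (1 - p j / 3) ^ t) := by
    apply Finset.prod_le_prod
    · intro j hj
      rw [Finset.mem_Ioc] at hj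
      have := (hp01 j (by omega) (hj.2.trans hitr)).1
      positivity
    · exact hsmall
  have hB : ((1:ℝ)/5) ^ (r - it) ≤ ∏ j ∈ Finset.Ioc it r, (1 - (1 - p j / 3) ^ t) := by
    rw [← hcard2, ← Finset.prod_const]
    apply Finset.prod_le_prod (fun _ _ => by norm_num) hbigf
  have hAval : ∏ j ∈ Finset.Ioc 1 it, (p j * t / 15) =
      (∏ j ∈ Finset.Ioc 1 it, p j) * ((t:ℝ) / 15) ^ (it - 1) := by
    rw [← hcard1, ← Finset.prod_const, ← Finset.prod_mul_distrib]
    apply Finset.prod_congr rfl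
    intro j _; ring
  -- arithmetic identity
  have hexp : r - 1 = (it - 1) + (r - it) := by omega
  have hkey : (1 / 5 : ℝ) ^ (r - 1) * ((∏ j ∈ Finset.Icc 1 it, p j) / 3 ^ it) * (t : ℝ) ^ (it - 1)
      = p 1 / 3 * ((∏ j ∈ Finset.Ioc 1 it, p j) * ((t:ℝ) / 15) ^ (it - 1) *
        ((1:ℝ)/5) ^ (r - it)) := by
    rw [hQsplit, hexp, pow_add]
    have h3 : (3:ℝ) ^ it = 3 * 3 ^ (it - 1) := by
      rw [← pow_succ']
      congr 1; omega
    rw [h3, div_pow]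
    field_simp
    rw [show (15:ℝ) = 3 * 5 by norm_num, div_pow, mul_pow]
    field_simp
    ring
  rw [hkey, ← hsplit]
  have hQnn : (0:ℝ) ≤ ∏ j ∈ Finset.Ioc 1 it, p j := by
    apply Finset.prod_nonneg
    intro j hj; rw [Finset.mem_Ioc] at hj
    exact (hp01 j (by omega) (hj.2.trans hitr)).1
  apply mul_le_mul_of_nonneg_left _ (by linarith [hp1.1] : (0:ℝ) ≤ p 1 / 3)
  rw [← hAval]
  apply mul_le_mul hA hB (by positivity) (Finset.prod_nonneg _)
  intro j hj; rw [Finset.mem_Ioc] at hj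
  exact hfnonneg j (by omega) (hj.2.trans hitr)
end

section
/- Let r ≥ 2 be a fixed integer. There exists N such that for every natural number n ≥ N the following holds: for every real p with 0 ≤ p ≤ 1 and p·(ln n)^{1+1/r} ≤ 3/(4e²), and k := ⌈n/(4 (ln n)^{1+1/r})⌉, one has C(n, k) · (p/3)^{k} ≤ e^{−√n}, where C(n, k) is the binomial coefficient n choose k. -/
open Real Filter

/-- For fixed `r ≥ 2` and `n` large: if `0 ≤ p ≤ 1` with
`p (ln n)^(1+1/r) ≤ 3/(4e²)` and `k = ⌈n / (4 (ln n)^(1+1/r))⌉`, then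
`(n choose k) (p/3)^k ≤ e^(-√n)`. -/
theorem choose_times_pow_le (r : ℕ) (hr : 2 ≤ r) :
    ∃ N : ℕ, ∀ n : ℕ, N ≤ n →
      ∀ p : ℝ, 0 ≤ p → p ≤ 1 →
        p * Real.log n ^ ((1 : ℝ) + 1 / r) ≤ 3 / (4 * Real.exp 2) →
        ∀ k : ℕ, k = ⌈(n : ℝ) / (4 * Real.log n ^ ((1 : ℝ) + 1 / r))⌉₊ →
          (n.choose k : ℝ) * (p / 3) ^ k ≤ Real.exp (-Real.sqrt n) := by
  have hlo := (isLittleO_log_rpow_rpow_atTop ((1:ℝ) + 1/r)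
    (by norm_num : (0:ℝ) < 1/2)).def (by norm_num : (0:ℝ) < 1/8)
  have hlo' : ∀ᶠ n : ℕ in atTop,
      ‖Real.log (n:ℝ) ^ ((1:ℝ) + 1/r)‖ ≤ 1/8 * ‖(n:ℝ) ^ ((1:ℝ)/2)‖ :=
    tendsto_natCast_atTop_atTop.eventually hlo
  obtain ⟨N0, hN0⟩ := eventually_atTop.mp hlo'
  refine ⟨max N0 3, fun n hn p hp0 hp1 hpL k hk => ?_⟩
  have hn3 : 3 ≤ n := le_trans (le_max_right _ _) hn
  have hn0 : (0:ℝ) < n := by exact_mod_cast Nat.lt_of_lt_of_le (by norm_num) hn3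
  have hn1 : (1:ℝ) < n := by exact_mod_cast Nat.lt_of_lt_of_le (by norm_num) hn3
  have hlogpos : 0 < Real.log n := Real.log_pos hn1
  set L : ℝ := Real.log n ^ ((1:ℝ) + 1/r) with hLdef
  have hL : 0 < L := Real.rpow_pos_of_pos hlogpos _
  -- 4 L ≤ √n
  have h4L : 4 * L ≤ Real.sqrt n := by
    have := hN0 n (le_trans (le_max_left _ _) hn)
    rw [Real.norm_eq_abs, Real.norm_eq_abs, abs_of_nonneg hL.le,
      abs_of_nonneg (Real.rpow_nonneg hn0.le _)] at this
    have hsq : Real.sqrt n = (n:ℝ) ^ ((1:ℝ)/2) := Real.sqrt_eq_rpow _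
    rw [hsq]
    nlinarith [Real.rpow_nonneg hn0.le ((1:ℝ)/2)]
  have hkR : (n:ℝ) / (4 * L) ≤ (k:ℝ) := by rw [hk]; exact Nat.le_ceil _
  have hkpos : 0 < k := by
    rw [hk]; exact Nat.ceil_pos.2 (div_pos hn0 (by positivity))
  have hK : (0:ℝ) < k := by exact_mod_cast hkpos
  have hnk : (n:ℝ) ≤ (k:ℝ) * (4 * L) := (div_le_iff₀ (by positivity)).mp hkR
  have hsqk : Real.sqrt n ≤ (k:ℝ) := by
    have h1 : Real.sqrt n ≤ (n:ℝ) / (4 * L) := by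
      rw [le_div_iff₀ (by positivity)]
      calc Real.sqrt n * (4 * L) ≤ Real.sqrt n * Real.sqrt n :=
            mul_le_mul_of_nonneg_left h4L (Real.sqrt_nonneg _)
        _ = n := Real.mul_self_sqrt hn0.le
    linarith
  set e1 : ℝ := Real.exp 1 with he1
  have he1pos : 0 < e1 := Real.exp_pos 1
  have he2 : Real.exp 2 = e1 * e1 := by
    rw [he1, ← Real.exp_add]; norm_num
  have h1 : (n:ℝ) * p ≤ (k:ℝ) * (4 * L) * p := mul_le_mul_of_nonneg_right hnk hp0
  have h3 : p * L * (e1 * e1) ≤ 3 / 4 := by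
    have h5 := mul_le_mul_of_nonneg_right hpL (by positivity : (0:ℝ) ≤ e1 * e1)
    have h4 : 3 / (4 * Real.exp 2) * (e1 * e1) = 3 / 4 := by
      rw [he2]; field_simp
    linarith [h4 ▸ h5]
  have hexp : Real.exp (-1) * e1 = 1 := by rw [he1, ← Real.exp_add]; norm_num
  -- core bound
  have hcore : (n:ℝ) * (p / 3) * e1 ≤ Real.exp (-1) * k := by
    nlinarith [mul_le_mul_of_nonneg_right h1 (by positivity : (0:ℝ) ≤ e1 * e1),
      mul_le_mul_of_nonneg_left h3 (by positivity : (0:ℝ) ≤ 4 * (k:ℝ)),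
      hexp, he1pos, hK, Real.exp_pos (-1)]
  have hq : (0:ℝ) ≤ p / 3 := by positivity
  -- factorial bound : 1/k! ≤ e1^k / k^k
  have hfact : (k:ℝ) ^ k / (k.factorial : ℝ) ≤ Real.exp k :=
    Real.pow_div_factorial_le_exp (k:ℝ) hK.le k
  have hfactpos : (0:ℝ) < (k.factorial : ℝ) := by exact_mod_cast k.factorial_pos
  have hinv : (1:ℝ) / (k.factorial : ℝ) ≤ e1 ^ k / (k:ℝ) ^ k := by
    rw [div_le_div_iff₀ hfactpos (by positivity), one_mul]
    have : Real.exp k = e1 ^ k := by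
      rw [he1, ← Real.exp_nat_mul]; norm_num
    rw [← this]
    exact (div_le_iff₀ hfactpos).mp hfact
  calc (n.choose k : ℝ) * (p / 3) ^ k
      ≤ ((n:ℝ) ^ k / (k.factorial : ℝ)) * (p / 3) ^ k := by
        have := Nat.choose_le_pow_div (α := ℝ) k n
        exact mul_le_mul_of_nonneg_right (by exact_mod_cast this) (by positivity)
    _ = (n:ℝ) ^ k * (p / 3) ^ k * (1 / (k.factorial : ℝ)) := by ring
    _ ≤ (n:ℝ) ^ k * (p / 3) ^ k * (e1 ^ k / (k:ℝ) ^ k) :=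
        mul_le_mul_of_nonneg_left hinv (by positivity)
    _ = ((n:ℝ) * (p / 3) * e1 / (k:ℝ)) ^ k := by
        simp only [div_pow, mul_pow]; ring
    _ ≤ (Real.exp (-1)) ^ k := by
        apply pow_le_pow_left₀ (by positivity)
        rw [div_le_iff₀ hK]
        linarith
    _ = Real.exp (-(k:ℝ)) := by
        rw [← Real.exp_nat_mul]; ring_nf
    _ ≤ Real.exp (-Real.sqrt n) := Real.exp_le_exp.2 (by linarith)
end

section
/- Let r ≥ 2 be an integer, n ≥ 3 a natural number, and c > 0 a real number with (1/16)^{r} · c/(ln n) ≤ 1. Set t_0 := (ln n)/c and t_1 := (ln n)^{1+1/r}, and for each integer t with t_0 ≤ t ≤ t_1 let e_t be any integer with 1 ≤ e_t ≤ r − 1. Then ∏_{t ∈ ℤ, t_0 ≤ t ≤ t_1} (1 − exp(−(1/16)^{r} (c t/ln n)^{e_t})) ≥ n^{−2^{8r+2}/c}. -/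
/-- With `t₀ = (ln n)/c`, `t₁ = (ln n)^(1+1/r)` and exponents
`1 ≤ e t ≤ r - 1` for each integer `t ∈ [t₀, t₁]`, we have
`∏_{t₀ ≤ t ≤ t₁} (1 - exp(-(1/16)^r (c t / ln n)^(e t))) ≥ n^(-2^(8r+2)/c)`. -/
theorem product_lower_bound_t0_t1 (r : ℕ) (hr : 2 ≤ r) (n : ℕ) (hn : 3 ≤ n)
    (c : ℝ) (hc : 0 < c)
    (hsmall : (1 / 16 : ℝ) ^ r * c / Real.log n ≤ 1)
    (t₀ t₁ : ℝ) (ht₀ : t₀ = Real.log n / c) (ht₁ : t₁ = Real.log n ^ ((1 : ℝ) + 1 / r))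
    (e : ℤ → ℕ)
    (he : ∀ t : ℤ, t₀ ≤ (t : ℝ) → (t : ℝ) ≤ t₁ → 1 ≤ e t ∧ e t ≤ r - 1) :
    (n : ℝ) ^ (-(2 : ℝ) ^ (8 * r + 2) / c) ≤
      ∏ t ∈ Finset.Icc ⌈t₀⌉ ⌊t₁⌋,
        (1 - Real.exp (-(1 / 16 : ℝ) ^ r * (c * (t : ℝ) / Real.log n) ^ (e t))) := by
  set L : ℝ := Real.log n with hLdef
  have hn1 : (1 : ℝ) < n := by exact_mod_cast lt_of_lt_of_le (by norm_num) hn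
  have hL : 0 < L := Real.log_pos hn1
  set α : ℝ := (1 / 16 : ℝ) ^ r with hαdef
  have hα0 : 0 < α := by positivity
  have hα1 : α ≤ 1 := pow_le_one₀ (by norm_num) (by norm_num)
  set β : ℝ := α * c / L with hβdef
  have hβ0 : 0 < β := by positivity
  have hβ1 : β ≤ 1 := hsmall
  -- basic: t₀ > 0
  have ht₀pos : 0 < t₀ := by rw [ht₀]; positivity
  set a : ℤ := ⌈t₀⌉ with hadef
  set b : ℤ := ⌊t₁⌋ with hbdef
  have ha1 : (1 : ℤ) ≤ a := by
    have := Int.ceil_pos.mpr ht₀pos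
    omega
  -- helper: 1 - exp(-β/2·…) type facts
  have hexp_le : Real.exp (-β) ≤ 1 - β / 2 := by
    have h1 := Real.add_one_le_exp β
    have h2 : Real.exp (-β) * Real.exp β = 1 := by
      rw [← Real.exp_add]; simp
    have h3 := Real.exp_pos β
    nlinarith
  -- pointwise bound
  have hpoint : ∀ t ∈ Finset.Icc a b,
      Real.exp (-(2 / α) * Real.exp (-β * (t : ℝ))) ≤
        1 - Real.exp (-(1 / 16 : ℝ) ^ r * (c * (t : ℝ) / L) ^ (e t)) := by
    intro t ht
    rw [Finset.mem_Icc] at ht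
    have hta : t₀ ≤ (t : ℝ) := le_trans (Int.le_ceil t₀) (by exact_mod_cast ht.1)
    have htb : (t : ℝ) ≤ t₁ := le_trans (by exact_mod_cast ht.2) (Int.floor_le t₁)
    have hy1 : 1 ≤ c * (t : ℝ) / L := by
      rw [le_div_iff₀ hL, one_mul]
      rw [ht₀, div_le_iff₀ hc] at hta
      linarith [hta]
    have he1 : 1 ≤ e t := (he t hta htb).1
    set y : ℝ := c * (t : ℝ) / L with hydef
    have hyy : y ≤ y ^ (e t) := le_self_pow₀ hy1 (by omega)
    set x : ℝ := α * y ^ (e t) with hxdef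
    have hβtx : β * (t : ℝ) ≤ x := by
      have : β * (t : ℝ) = α * y := by
        rw [hβdef, hydef]; field_simp
      rw [this, hxdef]
      exact mul_le_mul_of_nonneg_left hyy hα0.le
    have hαx : α ≤ x := by
      have : α * 1 ≤ α * y ^ (e t) :=
        mul_le_mul_of_nonneg_left (le_trans hy1 hyy) hα0.le
      simpa using this
    have hx0 : 0 < x := lt_of_lt_of_le hα0 hαx
    have hkey : -(1 / 16 : ℝ) ^ r * (c * (t : ℝ) / L) ^ (e t) = -x := by
      rw [hxdef, hydef, hαdef]; ring
    rw [hkey]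
    set u : ℝ := Real.exp (-x) with hudef
    have hu0 : 0 < u := Real.exp_pos _
    have hu1 : u < 1 := Real.exp_lt_one_iff.mpr (by linarith)
    -- 1 - u ≥ α / 2
    have h2 : α / 2 ≤ 1 - u := by
      have hmono : u ≤ Real.exp (-α) := Real.exp_le_exp.mpr (by linarith)
      have hα' : Real.exp (-α) ≤ 1 - α / 2 := by
        have h1 := Real.add_one_le_exp α
        have h2' : Real.exp (-α) * Real.exp α = 1 := by
          rw [← Real.exp_add]; simp
        have h3 := Real.exp_pos α
        nlinarith
      linarith
    -- chain of exponentials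
    have step1 : Real.exp (-(2 / α) * Real.exp (-β * (t : ℝ))) ≤
        Real.exp (-(2 / α) * u) := by
      apply Real.exp_le_exp.mpr
      have : u ≤ Real.exp (-β * (t : ℝ)) := Real.exp_le_exp.mpr (by linarith)
      nlinarith [div_pos (by norm_num : (0:ℝ) < 2) hα0]
    have step2 : Real.exp (-(2 / α) * u) ≤ Real.exp (-(u / (1 - u))) := by
      apply Real.exp_le_exp.mpr
      have h1u : 0 < 1 - u := by linarith
      rw [neg_mul, neg_le_neg_iff, div_le_iff₀ h1u]
      have : 2 / α * (1 - u) ≥ 1 := by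
        rw [ge_iff_le, ← div_le_iff₀' (by positivity : (0:ℝ) < 2 / α)]
        calc (1 : ℝ) / (2 / α) = α / 2 := by field_simp
          _ ≤ 1 - u := h2
      calc u = u * 1 := (mul_one u).symm
        _ ≤ u * (2 / α * (1 - u)) := mul_le_mul_of_nonneg_left this hu0.le
        _ = 2 / α * u * (1 - u) := by ring
    have step3 : Real.exp (-(u / (1 - u))) ≤ 1 - u := by
      have h1u : 0 < 1 - u := by linarith
      have hkey2 := Real.add_one_le_exp (u / (1 - u))
      have hp := Real.exp_pos (u / (1 - u))
      have hone : (u / (1 - u) + 1) * (1 - u) = 1 := by field_simp; ring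
      have hge : 1 ≤ Real.exp (u / (1 - u)) * (1 - u) := by
        have := mul_le_mul_of_nonneg_right hkey2 h1u.le
        linarith
      have h6 := mul_le_mul_of_nonneg_left hge (inv_nonneg.mpr hp.le)
      rw [Real.exp_neg]
      calc (Real.exp (u / (1 - u)))⁻¹ = (Real.exp (u / (1 - u)))⁻¹ * 1 := (mul_one _).symm
        _ ≤ (Real.exp (u / (1 - u)))⁻¹ * (Real.exp (u / (1 - u)) * (1 - u)) := h6
        _ = 1 - u := by field_simp
    exact le_trans step1 (le_trans step2 step3)
  -- geometric sum bound
  set q : ℝ := Real.exp (-β) with hqdef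
  have hq0 : 0 ≤ q := (Real.exp_pos _).le
  have hq1 : q < 1 := Real.exp_lt_one_iff.mpr (by linarith)
  have hsum : ∑ t ∈ Finset.Icc a b, Real.exp (-β * (t : ℝ)) ≤ 2 / β := by
    have hsub : Finset.Icc a b ⊆
        Finset.image (fun k : ℕ => (k : ℤ)) (Finset.range (b.toNat + 1)) := by
      intro t ht
      rw [Finset.mem_Icc] at ht
      rw [Finset.mem_image]
      refine ⟨t.toNat, Finset.mem_range.mpr (by omega), by omega⟩
    calc ∑ t ∈ Finset.Icc a b, Real.exp (-β * (t : ℝ))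
        ≤ ∑ t ∈ Finset.image (fun k : ℕ => (k : ℤ)) (Finset.range (b.toNat + 1)),
            Real.exp (-β * (t : ℝ)) := by
          apply Finset.sum_le_sum_of_subset_of_nonneg hsub
          intro i _ _; positivity
      _ = ∑ k ∈ Finset.range (b.toNat + 1), Real.exp (-β * (k : ℝ)) := by
          rw [Finset.sum_image (by intro x _ y _ h; simpa using h)]
          simp
      _ = ∑ k ∈ Finset.range (b.toNat + 1), q ^ k := by
          apply Finset.sum_congr rfl
          intro k _
          rw [hqdef, ← Real.exp_nat_mul]
          ring_nf
      _ ≤ ∑' k : ℕ, q ^ k := by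
          apply Summable.sum_le_tsum _ (fun i _ => by positivity)
          exact summable_geometric_of_lt_one hq0 hq1
      _ = (1 - q)⁻¹ := tsum_geometric_of_lt_one hq0 hq1
      _ ≤ 2 / β := by
          rw [inv_eq_one_div, div_le_div_iff₀ (by linarith : (0:ℝ) < 1 - q) hβ0]
          linarith [hexp_le]
  -- assemble
  have hprod : Real.exp (-(2 / α) * (2 / β)) ≤
      ∏ t ∈ Finset.Icc a b,
        (1 - Real.exp (-(1 / 16 : ℝ) ^ r * (c * (t : ℝ) / L) ^ (e t))) := by
    calc Real.exp (-(2 / α) * (2 / β))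
        ≤ Real.exp (∑ t ∈ Finset.Icc a b, -(2 / α) * Real.exp (-β * (t : ℝ))) := by
          apply Real.exp_le_exp.mpr
          rw [← Finset.mul_sum]
          rw [neg_mul, neg_mul, neg_le_neg_iff]
          exact mul_le_mul_of_nonneg_left hsum (by positivity)
      _ = ∏ t ∈ Finset.Icc a b, Real.exp (-(2 / α) * Real.exp (-β * (t : ℝ))) :=
          Real.exp_sum _ _
      _ ≤ _ := Finset.prod_le_prod (fun i _ => (Real.exp_pos _).le) hpoint
  have heq : (n : ℝ) ^ (-(2 : ℝ) ^ (8 * r + 2) / c) = Real.exp (-(2 / α) * (2 / β)) := by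
    rw [Real.rpow_def_of_pos (by positivity : (0:ℝ) < n)]
    congr 1
    have hα2 : α ^ 2 * 2 ^ (8 * r + 2) = 4 := by
      have h1 : (2 : ℝ) ^ (8 * r + 2) = 16 ^ (2 * r) * 4 := by
        rw [show 8 * r + 2 = 4 * (2 * r) + 2 by ring, pow_add, pow_mul]
        norm_num
      have h2 : α ^ 2 = (1 / 16 : ℝ) ^ (2 * r) := by
        rw [hαdef, ← pow_mul, mul_comm]
      rw [h1, h2, ← mul_assoc, ← mul_pow]
      norm_num
    have h48 : (2 : ℝ) ^ (8 * r + 2) = 4 / α ^ 2 := by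
      rw [eq_div_iff (by positivity : (α : ℝ) ^ 2 ≠ 0)]
      linarith [hα2]
    have hαne : α ≠ 0 := ne_of_gt hα0
    have hcne : c ≠ 0 := ne_of_gt hc
    have hLne : L ≠ 0 := ne_of_gt hL
    rw [h48, hβdef]
    field_simp
    ring
  rw [heq]
  exact hprod
end

section
/- Let r ≥ 2 be an integer, n ≥ 3 a natural number, and C := 2^{8r²}. Suppose 0 ≤ p_1 ≤ p_2 ≤ … ≤ p_r ≤ 1 are real numbers with p_1 ≥ C (ln n)/n and p_1 p_2 ⋯ p_i ≥ C/(n (ln n)^{i−1}) for every 2 ≤ i ≤ r. Let x be a real number with (ln n)^{1+1/r} ≤ x ≤ n/2^{r+2}, set p_0 := 0, and let j := max{ j ∈ {0, 1, …, r} : p_j x ≤ 6 }. Then (n/2) · (∏_{k=1}^{j} p_k x/12) · (1/2)^{r−j} ≥ 2x. -/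
/-- Expected-growth estimate in the doubling stage: with `C = 2^(8r²)`,
supercritical probabilities, `(ln n)^(1+1/r) ≤ x ≤ n/2^(r+2)`, `p 0 = 0` and
`j` the largest index in `{0, …, r}` with `p j * x ≤ 6`, we have
`(n/2) ∏_{k=1}^{j} (p k x / 12) (1/2)^(r-j) ≥ 2x`. -/
theorem doubling_expected_growth (r : ℕ) (hr : 2 ≤ r) (n : ℕ) (hn : 3 ≤ n)
    (C : ℝ) (hC : C = 2 ^ (8 * r ^ 2)) (p : ℕ → ℝ)
    (hp0 : p 0 = 0)
    (hp01 : ∀ i, 1 ≤ i → i ≤ r → 0 ≤ p i ∧ p i ≤ 1)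
    (hmono : ∀ i j, 1 ≤ i → i ≤ j → j ≤ r → p i ≤ p j)
    (h1 : C * Real.log n / n ≤ p 1)
    (hprod : ∀ i, 2 ≤ i → i ≤ r →
      C / (n * (Real.log n) ^ (i - 1)) ≤ ∏ k ∈ Finset.Icc 1 i, p k)
    (x : ℝ)
    (hx1 : Real.log n ^ ((1 : ℝ) + 1 / r) ≤ x)
    (hx2 : x ≤ (n : ℝ) / 2 ^ (r + 2))
    (j : ℕ) (hj : j = sSup {j : ℕ | j ≤ r ∧ p j * x ≤ 6}) :
    2 * x ≤ (n : ℝ) / 2 * (∏ k ∈ Finset.Icc 1 j, p k * x / 12) * (1 / 2) ^ (r - j) := by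
  have hjS : j ≤ r ∧ p j * x ≤ 6 := by
    have h0 : (0:ℕ) ∈ {j : ℕ | j ≤ r ∧ p j * x ≤ 6} := by
      constructor
      · exact Nat.zero_le r
      · rw [hp0]; norm_num
    have hbdd : BddAbove {j : ℕ | j ≤ r ∧ p j * x ≤ 6} := ⟨r, fun a ha => ha.1⟩
    rw [hj]
    exact Nat.sSup_mem ⟨0, h0⟩ hbdd
  obtain ⟨hjr, -⟩ := hjS
  have hn3 : (3:ℝ) ≤ (n:ℝ) := by exact_mod_cast hn
  have hnpos : (0:ℝ) < n := by linarith
  have hln : 1 ≤ Real.log n := by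
    rw [Real.le_log_iff_exp_le hnpos]
    calc Real.exp 1 ≤ 2.7182818286 := Real.exp_one_lt_d9.le
      _ ≤ (n:ℝ) := by linarith
  have hLx : Real.log n ≤ x := by
    calc Real.log n = Real.log n ^ (1:ℝ) := (Real.rpow_one _).symm
      _ ≤ Real.log n ^ ((1:ℝ) + 1/r) := by
          apply Real.rpow_le_rpow_of_exponent_le hln
          have : (0:ℝ) ≤ 1/r := by positivity
          linarith
      _ ≤ x := hx1
  have hx1' : (1:ℝ) ≤ x := le_trans hln hLx
  have hxpos : (0:ℝ) < x := by linarith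
  have hCpos : (0:ℝ) < C := by rw [hC]; positivity
  have hre : ∏ k ∈ Finset.Icc 1 j, p k * x / 12
      = (∏ k ∈ Finset.Icc 1 j, p k) * (x/12)^j := by
    simp only [mul_div_assoc]
    rw [Finset.prod_mul_distrib, Finset.prod_const, Nat.card_Icc]
    simp
  rw [hre]
  rcases Nat.eq_zero_or_pos j with hj0 | hj1
  · subst hj0
    rw [show Finset.Icc 1 0 = (∅ : Finset ℕ) from rfl]
    rw [Finset.prod_empty, pow_zero, Nat.sub_zero]
    have hEq : (n:ℝ)/2 * (1 * 1) * (1/2)^r = n / (2^(r+1)) := by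
      rw [one_div, inv_pow, pow_succ]
      field_simp
    rw [hEq, le_div_iff₀ (by positivity)]
    rw [le_div_iff₀ (by positivity : (0:ℝ) < 2^(r+2))] at hx2
    calc 2*x*2^(r+1) = x*2^(r+2) := by rw [pow_succ, pow_succ]; ring
      _ ≤ n := hx2
  · obtain ⟨m, rfl⟩ : ∃ m, j = m + 1 := ⟨j - 1, (Nat.succ_pred_eq_of_pos hj1).symm⟩
    set L := Real.log n with hL
    have hLpos : (0:ℝ) < L := by linarith
    have hA : C / (n * L ^ m) ≤ ∏ k ∈ Finset.Icc 1 (m+1), p k := by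
      rcases Nat.eq_zero_or_pos m with hm0 | hm1
      · subst hm0
        simp only [Finset.Icc_self, Finset.prod_singleton, pow_zero, mul_one]
        calc C / (n:ℝ) ≤ C * L / n :=
              (div_le_div_iff_of_pos_right hnpos).mpr (le_mul_of_one_le_right hCpos.le hln)
          _ ≤ p 1 := h1
      · have h := hprod (m+1) (by omega) hjr
        simpa using h
    have hconst : (12:ℝ)^(m+1) * 2^(r-(m+1)) * 4 ≤ C := by
      rw [hC]
      calc (12:ℝ)^(m+1) * 2^(r-(m+1)) * 4
          ≤ 12^(m+1) * 12^(r-(m+1)) * 4 := by gcongr <;> norm_num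
        _ = 12^r * 4 := by rw [← pow_add]; congr 2; omega
        _ ≤ 16^r * 4 := by gcongr <;> norm_num
        _ = 2^(4*r) * 4 := by rw [pow_mul]; norm_num
        _ = 2^(4*r+2) := by rw [pow_add]; norm_num
        _ ≤ 2^(8*r^2) := by
            apply pow_le_pow_right₀ (by norm_num)
            nlinarith
    have hxm : L^m ≤ x^m := pow_le_pow_left₀ hLpos.le hLx m
    have hkey : L^m * (12^(m+1) * 2^(r-(m+1)) * 4) ≤ x^m * C :=
      mul_le_mul hxm hconst (by positivity) (by positivity)
    have hgc : (n:ℝ)/2 * (C/(n*L^m) * (x/12)^(m+1)) * (1/2)^(r-(m+1))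
        ≤ (n:ℝ)/2 * ((∏ k ∈ Finset.Icc 1 (m+1), p k) * (x/12)^(m+1)) * (1/2)^(r-(m+1)) := by
      gcongr
    refine le_trans ?_ hgc
    have hn0 : (n:ℝ) ≠ 0 := ne_of_gt hnpos
    have hL0 : L ≠ 0 := ne_of_gt hLpos
    have heq : (n:ℝ)/2 * (C/(n*L^m) * (x/12)^(m+1)) * (1/2)^(r-(m+1))
        = C * x^m * x / (L^m * (12^(m+1) * 2^(r-(m+1)) * 2)) := by
      rw [div_pow, one_div, inv_pow, pow_succ]
      field_simp
    rw [heq, le_div_iff₀ (by positivity)]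
    nlinarith [mul_le_mul_of_nonneg_right hkey hxpos.le]
end

section
/- Let r ≥ 2 be an integer, n ≥ 1 a natural number, and suppose 0 ≤ p_1 ≤ p_2 ≤ … ≤ p_r ≤ 1 are real numbers with p_1 ≥ 2^{8r²} (ln n)/n. Let W ⊆ {1, …, n} be a fixed subset with |W| ≥ n/2^{r+2}, and let G = (V, E_1, …, E_r) be the r-fold binomial random graph G(n, p_1/3, …, p_r/3). Then with probability at least 1 − r/n, for every vertex v ∈ V \ W and every colour i ∈ {1, …, r} there exists w ∈ W with {v, w} ∈ E_i. -/
open MeasureTheory Filter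

noncomputable section

namespace Jigsaw

variable {V : Type*} {r : ℕ}

/-- Bernoulli measure on `Bool` with success probability `p` (truncated into `[0,1]`). -/
def bernoulliBool (p : ℝ) : Measure Bool :=
  (PMF.bernoulli (min 1 (Real.toNNReal p)) (min_le_left _ _)).toMeasure

instance (p : ℝ) : IsProbabilityMeasure (bernoulliBool p) :=
  PMF.toMeasure.isProbabilityMeasure _

/-- The law of the `r`-fold binomial random graph on vertex set `Fin n`, where each pair
is an edge of colour `i` with probability `p i`, independently. -/
def foldMeasure (n r : ℕ) (p : Fin r → ℝ) : Measure (Fin r → Sym2 (Fin n) → Bool) :=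
  Measure.pi fun i => Measure.pi fun _e => bernoulliBool (p i)

/-- The edge sets of the sample point `ω`. -/
def edges {n r : ℕ} (ω : Fin r → Sym2 (Fin n) → Bool) (i : Fin r) : Set (Sym2 (Fin n)) :=
  {e | ω i e = true}

/-- `Pprod p i n` is the product `p 1 n * p 2 n * ⋯ * p i n`. -/
def Pprod (p : ℕ → ℕ → ℝ) (i n : ℕ) : ℝ := ∏ j ∈ Finset.Icc 1 i, p j n

lemma measSet {n r : ℕ} (S : Set (Fin r → Sym2 (Fin n) → Bool)) : MeasurableSet S :=
  S.toFinite.countable.measurableSet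

lemma bernoulliBool_false (x : ℝ) :
    bernoulliBool x {false} = 1 - min 1 (ENNReal.ofReal x) := by
  rw [bernoulliBool, PMF.toMeasure_apply_singleton _ _ (measurableSet_singleton _)]
  show (1:ENNReal) - ((min 1 (Real.toNNReal x) : NNReal) : ENNReal) = _
  rw [ENNReal.coe_min, ENNReal.coe_one]; rfl

lemma bad_measure {n r : ℕ} (q : Fin r → ℝ) (v : Fin n) (i : Fin r) (W : Finset (Fin n)) :
    foldMeasure n r q {ω | ∀ w ∈ W, ω i s(v, w) = false}
      = (bernoulliBool (q i) {false}) ^ W.card := by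
  classical
  set S : Finset (Sym2 (Fin n)) := W.image (fun w => s(v, w)) with hS
  have hset : {ω : Fin r → Sym2 (Fin n) → Bool | ∀ w ∈ W, ω i s(v, w) = false}
      = Set.pi Set.univ (fun j => if j = i then
          Set.pi Set.univ (fun e => if e ∈ S then ({false} : Set Bool) else Set.univ)
          else Set.univ) := by
    ext ω
    simp only [Set.mem_setOf_eq, Set.mem_pi, Set.mem_univ, true_implies]
    constructor
    · intro h j
      by_cases hj : j = i
      · subst hj; simp only [if_pos rfl, Set.mem_pi, Set.mem_univ, true_implies]
        intro e _
        by_cases he : e ∈ S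
        · simp only [if_pos he]
          obtain ⟨w, hw, rfl⟩ := Finset.mem_image.mp he
          exact h w hw
        · simp [he]
      · simp [hj]
    · intro h w hw
      have h2 := h i
      simp only [if_pos rfl, Set.mem_pi, Set.mem_univ, true_implies] at h2
      have he : s(v, w) ∈ S := Finset.mem_image_of_mem _ hw
      simpa [he] using h2 s(v, w)
  rw [hset, foldMeasure, Measure.pi_pi]
  rw [Finset.prod_eq_single_of_mem i (Finset.mem_univ i)
    (fun j _ hj => by rw [if_neg hj, measure_univ])]
  rw [if_pos rfl, Measure.pi_pi]
  have heq : ∀ e : Sym2 (Fin n),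
      bernoulliBool (q i) (if e ∈ S then ({false} : Set Bool) else Set.univ)
      = if e ∈ S then bernoulliBool (q i) {false} else 1 := by
    intro e
    by_cases he : e ∈ S
    · rw [if_pos he, if_pos he]
    · rw [if_neg he, if_neg he, measure_univ]
  simp_rw [heq]
  rw [Finset.prod_ite_mem, Finset.univ_inter, Finset.prod_const]
  congr 1
  rw [hS]
  exact Finset.card_image_of_injective _ (fun a b hab => Sym2.congr_right.mp hab)

lemma real_bound (r n : ℕ) (hr : 2 ≤ r) (hn : 1 ≤ n) (p1 : ℝ) (hp0 : 0 ≤ p1) (hp1 : p1 ≤ 1)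
    (h1 : (2:ℝ)^(8*r^2) * Real.log n / n ≤ p1) (m : ℕ) (hm : (n:ℝ)/2^(r+2) ≤ m) :
    (1 - p1/3) ^ m ≤ 1 / (n:ℝ)^2 := by
  have hn' : (1:ℝ) ≤ n := by exact_mod_cast hn
  have hnpos : (0:ℝ) < n := by linarith
  have hln : 0 ≤ Real.log n := Real.log_nonneg hn'
  have hx0 : (0:ℝ) ≤ 1 - p1/3 := by linarith
  have step1 : (1 - p1/3:ℝ) ^ m ≤ Real.exp (-(p1/3)) ^ m := by
    apply pow_le_pow_left₀ hx0
    have := Real.add_one_le_exp (-(p1/3))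
    linarith
  have step2 : Real.exp (-(p1/3)) ^ m = Real.exp (-(p1/3) * m) := by
    rw [← Real.exp_nat_mul]; ring_nf
  have hpow : (6:ℝ) * 2^(r+2) ≤ 2^(8*r^2) := by
    have h5 : r + 5 ≤ 8 * r^2 := by nlinarith
    calc (6:ℝ) * 2^(r+2) ≤ 8 * 2^(r+2) := by
          have : (0:ℝ) < 2^(r+2) := by positivity
          nlinarith
      _ = 2^(r+5) := by rw [pow_add]; ring
      _ ≤ 2^(8*r^2) := by
          apply pow_le_pow_right₀ (by norm_num) h5
  have key : 2 * Real.log n ≤ (p1/3) * m := by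
    have h2 : (2:ℝ)^(8*r^2) * Real.log n / n / 3 * ((n:ℝ)/2^(r+2)) ≤ (p1/3) * m := by
      apply mul_le_mul (by linarith) hm (by positivity) (by positivity)
    have h3 : 2 * Real.log n ≤ (2:ℝ)^(8*r^2) / (3 * 2^(r+2)) * Real.log n := by
      apply mul_le_mul_of_nonneg_right _ hln
      rw [le_div_iff₀ (by positivity)]
      linarith
    have h4 : (2:ℝ)^(8*r^2) / (3 * 2^(r+2)) * Real.log n
        = (2:ℝ)^(8*r^2) * Real.log n / n / 3 * ((n:ℝ)/2^(r+2)) := by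
      field_simp
    linarith [h4 ▸ h3, h2]
  have hfin : Real.exp (-(p1/3) * m) ≤ 1 / (n:ℝ)^2 := by
    have : (1:ℝ) / (n:ℝ)^2 = Real.exp (-(2 * Real.log n)) := by
      rw [show (2:ℝ) * Real.log n = Real.log ((n:ℝ)^2) by rw [Real.log_pow]; norm_num,
        Real.exp_neg, Real.exp_log (by positivity), one_div]
    rw [this]
    apply Real.exp_le_exp.mpr
    nlinarith
  calc (1 - p1/3:ℝ) ^ m ≤ Real.exp (-(p1/3)) ^ m := step1
    _ = Real.exp (-(p1/3) * m) := step2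
    _ ≤ 1 / (n:ℝ)^2 := hfin


/-- Part III of the supercritical argument: if `p 1 ≥ 2^(8r²) ln n / n` and
`W` is a fixed set of at least `n/2^(r+2)` vertices, then in the `r`-fold binomial random
graph with probabilities `p i / 3`, with probability at least `1 - r/n` every vertex outside
`W` is joined to `W` by an edge of every colour. -/
theorem part_three_domination (r : ℕ) (hr : 2 ≤ r) (n : ℕ) (hn : 1 ≤ n)
    (p : ℕ → ℝ)
    (hp01 : ∀ i, 1 ≤ i → i ≤ r → 0 ≤ p i ∧ p i ≤ 1)
    (hmono : ∀ i j, 1 ≤ i → i ≤ j → j ≤ r → p i ≤ p j)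
    (h1 : (2 : ℝ) ^ (8 * r ^ 2) * Real.log n / n ≤ p 1)
    (W : Finset (Fin n)) (hW : (n : ℝ) / 2 ^ (r + 2) ≤ (W.card : ℝ)) :
    ENNReal.ofReal (1 - (r : ℝ) / n) ≤
      foldMeasure n r (fun k => p (k.1 + 1) / 3)
        {ω | ∀ v : Fin n, v ∉ W → ∀ i : Fin r, ∃ w ∈ W, s(v, w) ∈ edges ω i} := by
  classical
  set q : Fin r → ℝ := fun k => p (k.1 + 1) / 3 with hqdef
  have hprob : IsProbabilityMeasure (foldMeasure n r q) := by
    rw [foldMeasure]; infer_instance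
  set μ := foldMeasure n r q with hμ
  set E : Set (Fin r → Sym2 (Fin n) → Bool) :=
    {ω | ∀ v : Fin n, v ∉ W → ∀ i : Fin r, ∃ w ∈ W, s(v, w) ∈ edges ω i} with hE
  have hn' : (1:ℝ) ≤ n := by exact_mod_cast hn
  have hnpos : (0:ℝ) < n := by linarith
  have hrn : (0:ℝ) ≤ (r:ℝ)/n := by positivity
  -- pointwise bound on each bad event
  have hp1 := hp01 1 le_rfl (by omega)
  have hterm : ∀ (v : Fin n) (i : Fin r),
      μ {ω : Fin r → Sym2 (Fin n) → Bool | ∀ w ∈ W, ω i s(v, w) = false}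
        ≤ ENNReal.ofReal (1 / (n:ℝ)^2) := by
    intro v i
    rw [hμ, bad_measure, bernoulliBool_false]
    have hpi := hp01 (i.1 + 1) (by omega) (by omega)
    have hq0 : 0 ≤ q i := by rw [hqdef]; dsimp only; linarith [hpi.1]
    have hq1 : q i ≤ 1 := by rw [hqdef]; dsimp only; linarith [hpi.2]
    have hmin : min 1 (ENNReal.ofReal (q i)) = ENNReal.ofReal (q i) :=
      min_eq_right (ENNReal.ofReal_le_one.mpr hq1)
    have hc : (1 : ENNReal) - min 1 (ENNReal.ofReal (q i)) = ENNReal.ofReal (1 - q i) := by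
      rw [hmin, ← ENNReal.ofReal_one, ← ENNReal.ofReal_sub _ hq0]
    rw [hc]
    have hq1' : q i = p (i.1 + 1) / 3 := rfl
    have hle : ENNReal.ofReal (1 - q i) ≤ ENNReal.ofReal (1 - p 1 / 3) := by
      apply ENNReal.ofReal_le_ofReal
      have := hmono 1 (i.1 + 1) le_rfl (by omega) (by omega)
      rw [hq1']; linarith
    calc ENNReal.ofReal (1 - q i) ^ W.card
        ≤ ENNReal.ofReal (1 - p 1 / 3) ^ W.card := pow_le_pow_left' hle _
      _ = ENNReal.ofReal ((1 - p 1 / 3) ^ W.card) := by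
          rw [ENNReal.ofReal_pow (by linarith [hp1.2])]
      _ ≤ ENNReal.ofReal (1 / (n:ℝ)^2) := by
          apply ENNReal.ofReal_le_ofReal
          exact real_bound r n hr hn (p 1) hp1.1 hp1.2 h1 W.card hW
  -- union bound
  have hcompl : μ Eᶜ ≤ ENNReal.ofReal ((r:ℝ)/n) := by
    have hsub : Eᶜ ⊆ ⋃ (v : Fin n), ⋃ (i : Fin r),
        {ω : Fin r → Sym2 (Fin n) → Bool | ∀ w ∈ W, ω i s(v, w) = false} := by
      intro ω hω
      simp only [hE, Set.mem_compl_iff, Set.mem_setOf_eq, not_forall] at hω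
      obtain ⟨v, hv, i, hi⟩ := hω
      refine Set.mem_iUnion.mpr ⟨v, Set.mem_iUnion.mpr ⟨i, ?_⟩⟩
      intro w hw
      by_contra hne
      exact hi ⟨w, hw, by simpa [edges] using hne⟩
    calc μ Eᶜ ≤ ∑' (v : Fin n), ∑' (i : Fin r),
          μ {ω : Fin r → Sym2 (Fin n) → Bool | ∀ w ∈ W, ω i s(v, w) = false} := by
          refine (measure_mono hsub).trans ?_
          exact (measure_iUnion_le _).trans (ENNReal.tsum_le_tsum fun v => measure_iUnion_le _)
      _ ≤ ∑' (_ : Fin n), ∑' (_ : Fin r), ENNReal.ofReal (1 / (n:ℝ)^2) :=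
          ENNReal.tsum_le_tsum fun v => ENNReal.tsum_le_tsum fun i => hterm v i
      _ = (n : ENNReal) * ((r : ENNReal) * ENNReal.ofReal (1 / (n:ℝ)^2)) := by
          rw [tsum_fintype, tsum_fintype]
          simp only [one_div, Finset.sum_const, Finset.card_univ, Fintype.card_fin, nsmul_eq_mul]
      _ ≤ ENNReal.ofReal ((r:ℝ)/n) := by
          rw [show ((n : ENNReal)) = ENNReal.ofReal (n:ℝ) by simp,
            show ((r : ENNReal)) = ENNReal.ofReal (r:ℝ) by simp,
            ← ENNReal.ofReal_mul (by positivity), ← ENNReal.ofReal_mul (by positivity)]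
          apply ENNReal.ofReal_le_ofReal
          rw [show (n:ℝ) * ((r:ℝ) * (1/(n:ℝ)^2)) = (r:ℝ)/n by field_simp]
  -- conclude
  have hEm : MeasurableSet E := measSet _
  have hadd : μ E + μ Eᶜ = 1 := (measure_add_measure_compl hEm).trans measure_univ
  have hME : μ E = 1 - μ Eᶜ :=
    ENNReal.eq_sub_of_add_eq (measure_ne_top _ _) hadd
  rw [hME]
  calc ENNReal.ofReal (1 - (r:ℝ)/n) = ENNReal.ofReal 1 - ENNReal.ofReal ((r:ℝ)/n) :=
        ENNReal.ofReal_sub _ hrn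
    _ ≤ 1 - μ Eᶜ := by rw [ENNReal.ofReal_one]; exact tsub_le_tsub_left hcompl 1


end Jigsaw
end
end
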